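/- Let G be a graph and v a vertex of G. Let G' be the graph obtained from G by deleting v and adding, for each pair v_i, v_j of neighbors of v, a new vertex v_{ij} adjacent exactly to v_i and v_j. Then G has an odd cycle transversal of size at most k not containing v if and only if G' has an odd cycle transversal of size at most k. -/

import Mathlib

variable {V : Type*}

/-- `O` is an odd cycle transversal of `G`: `G - O` is bipartite. -/
def IsOCT {W : Type*} (G : SimpleGraph W) (O : Set W) : Prop :=
  ∃ f : W → Bool, ∀ a b, G.Adj a b → a ∉ O → b ∉ O → f a ≠ f b

/-- Vertices of the gadget graph `G'`: the vertices of `G` other than `v`, together with a new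
vertex `v_{ij}` for each pair `{v_i, v_j}` of neighbours of `v`. -/
def GadgetVert (G : SimpleGraph V) (v : V) : Type _ :=
  {w : V // w ≠ v} ⊕ {p : Sym2 V // ¬ p.IsDiag ∧ ∀ x ∈ p, G.Adj v x}

/-- The gadget graph `G'` obtained from `G` by deleting `v` and adding, for each pair
`v_i, v_j` of neighbours of `v`, a new vertex adjacent exactly to `v_i` and `v_j`. -/
def gadget (G : SimpleGraph V) (v : V) : SimpleGraph (GadgetVert G v) where
  Adj a b :=
    match a, b with
    | Sum.inl w, Sum.inl w' => G.Adj w.1 w'.1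
    | Sum.inl w, Sum.inr p => w.1 ∈ p.1
    | Sum.inr p, Sum.inl w => w.1 ∈ p.1
    | Sum.inr _, Sum.inr _ => False
  symm := by
    constructor
    rintro (w | p) (w' | p') h
    · exact h.symm
    · exact h
    · exact h
    · exact h
  loopless := by
    constructor
    rintro (w | p) h
    · exact G.irrefl h
    · exact h

/-- Projection of gadget vertices back to `V`. -/
noncomputable def gadgetProj (G : SimpleGraph V) (v : V) : GadgetVert G v → V :=
  Sum.elim (fun w => w.1) (fun p => p.1.out.1)

/-- Colouring of gadget vertices induced by a colouring of `V`. -/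
def gadgetCol (G : SimpleGraph V) (v : V) (f : V → Bool) : GadgetVert G v → Bool :=
  Sum.elim (fun w => f w.1) (fun _ => f v)

open Classical in
/-- `G` has an odd cycle transversal of size at most `k` not containing `v` iff the gadget
graph `G'` has an odd cycle transversal of size at most `k`. -/
theorem stmt11 [Fintype V] [DecidableEq V] (G : SimpleGraph V) (v : V) (k : ℕ) :
    (∃ O : Finset V, O.card ≤ k ∧ v ∉ O ∧ IsOCT G ↑O) ↔
      (∃ O' : Finset (GadgetVert G v), O'.card ≤ k ∧ IsOCT (gadget G v) ↑O') := by
  constructor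
  · rintro ⟨O, hk, hv, f, hf⟩
    set O' : Finset (GadgetVert G v) :=
      O.attach.map ⟨fun x => (Sum.inl ⟨x.1, fun h => hv (h ▸ x.2)⟩ : GadgetVert G v), by
        intro a b h
        injection h with h1
        rw [Subtype.mk.injEq] at h1
        exact Subtype.ext h1⟩ with hO'
    have hmem : ∀ w : {w : V // w ≠ v}, (Sum.inl w : GadgetVert G v) ∈ O' ↔ w.1 ∈ O := by
      intro w
      rw [hO']; refine Finset.mem_map.trans ?_
      simp only [Finset.mem_attach, Function.Embedding.coeFn_mk,
        true_and, Subtype.exists]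
      constructor
      · rintro ⟨a, ha, h⟩
        injection h with h1
        have : a = w.1 := congrArg Subtype.val h1
        exact this ▸ ha
      · intro h
        exact ⟨w.1, h, rfl⟩
    refine ⟨O', ?_, ?_⟩
    · simpa [hO'] using hk
    · refine ⟨gadgetCol G v f, ?_⟩
      rintro (w | p) (w' | p') hadj ha hb
      · exact hf w.1 w'.1 hadj (fun h => ha ((hmem w).mpr h)) (fun h => hb ((hmem w').mpr h))
      · have hvw : G.Adj v w.1 := p'.2.2 _ hadj
        have hwO : w.1 ∉ (O : Set V) := fun h => ha ((hmem w).mpr h)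
        have := hf v w.1 hvw (by simpa using hv) hwO
        simpa [gadgetCol] using fun h => this h.symm
      · have hvw : G.Adj v w'.1 := p.2.2 _ hadj
        have hwO : w'.1 ∉ (O : Set V) := fun h => hb ((hmem w').mpr h)
        simpa [gadgetCol] using hf v w'.1 hvw (by simpa using hv) hwO
      · exact absurd hadj id
  · rintro ⟨O', hk, f', hf'⟩
    set g := gadgetProj G v with hg
    set O : Finset V := O'.image g with hO
    have hgv : ∀ a, g a ≠ v := by
      rintro (w | p)
      · exact w.2
      · exact (p.2.2 _ (Sym2.out_fst_mem p.1)).ne'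
    have hvO : v ∉ O := by
      simp only [hO, Finset.mem_image]
      rintro ⟨a, _, h⟩; exact hgv a h
    have hinl : ∀ (w : {w : V // w ≠ v}), w.1 ∉ O → Sum.inl w ∉ O' := by
      intro w hw h
      exact hw (Finset.mem_image_of_mem g h)
    -- key claim: all neighbours of v outside O get the same colour
    have key : ∀ x y (hx : G.Adj v x) (hy : G.Adj v y), x ∉ O → y ∉ O →
        f' (Sum.inl ⟨x, hx.ne'⟩) = f' (Sum.inl ⟨y, hy.ne'⟩) := by
      intro x y hx hy hxO hyO
      by_cases hxy : x = y
      · subst hxy; rfl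
      · have hpd : ¬ (s(x, y) : Sym2 V).IsDiag := by simp [hxy]
        have hpa : ∀ z ∈ (s(x, y) : Sym2 V), G.Adj v z := by
          intro z hz
          rcases Sym2.mem_iff.mp hz with h | h <;> subst h <;> assumption
        have hpO : Sum.inr ⟨s(x, y), hpd, hpa⟩ ∉ O' := by
          intro h
          have hmem : (s(x, y) : Sym2 V).out.1 ∈ (s(x, y) : Sym2 V) :=
            Sym2.out_fst_mem _
          have h2 : g (Sum.inr ⟨s(x, y), hpd, hpa⟩) ∈ O := Finset.mem_image_of_mem g h
          have h3 : (s(x, y) : Sym2 V).out.1 ∈ O := h2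
          rcases Sym2.mem_iff.mp hmem with h' | h'
          · exact hxO (h' ▸ h3)
          · exact hyO (h' ▸ h3)
        have h1 : f' (Sum.inl ⟨x, hx.ne'⟩) ≠ f' (Sum.inr ⟨s(x, y), hpd, hpa⟩) :=
          hf' _ _ (by simp [gadget]) (fun h => hinl _ hxO (Finset.mem_coe.mp h)) (fun h => hpO (Finset.mem_coe.mp h))
        have h2 : f' (Sum.inl ⟨y, hy.ne'⟩) ≠ f' (Sum.inr ⟨s(x, y), hpd, hpa⟩) :=
          hf' _ _ (by simp [gadget]) (fun h => hinl _ hyO (Finset.mem_coe.mp h)) (fun h => hpO (Finset.mem_coe.mp h))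
        rcases Bool.eq_false_or_eq_true (f' (Sum.inr ⟨s(x, y), hpd, hpa⟩)) with h | h <;>
          simp [h] at h1 h2 <;> simp [h1, h2]
    refine ⟨O, le_trans (Finset.card_image_le) hk, hvO, ?_⟩
    refine ⟨fun w => if hw : w = v then
        (if h : ∃ x, G.Adj v x ∧ x ∉ O then
          !(f' (Sum.inl ⟨h.choose, h.choose_spec.1.ne'⟩)) else true)
      else f' (Sum.inl ⟨w, hw⟩), ?_⟩
    intro a b hab haO hbO
    have haO' : a ∉ O := haO
    have hbO' : b ∉ O := hbO
    by_cases hav : a = v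
    · have hab' : G.Adj v b := hav ▸ hab
      have hbv : b ≠ v := fun h => hab.ne (hav.trans h.symm)
      have hex : ∃ x, G.Adj v x ∧ x ∉ O := ⟨b, hab', hbO'⟩
      simp only [dif_pos hav, dif_neg hbv, dif_pos hex]
      have := key hex.choose b hex.choose_spec.1 hab' hex.choose_spec.2 hbO'
      rw [this]
      simp
    · by_cases hbv : b = v
      · have hab' : G.Adj v a := hbv ▸ hab.symm
        have hex : ∃ x, G.Adj v x ∧ x ∉ O := ⟨a, hab', haO'⟩
        simp only [dif_pos hbv, dif_neg hav, dif_pos hex]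
        have := key hex.choose a hex.choose_spec.1 hab' hex.choose_spec.2 haO'
        rw [this]
        simp
      · simp only [dif_neg hav, dif_neg hbv]
        exact hf' (Sum.inl ⟨a, hav⟩) (Sum.inl ⟨b, hbv⟩) hab
          (fun h => hinl ⟨a, hav⟩ haO' (Finset.mem_coe.mp h)) (fun h => hinl ⟨b, hbv⟩ hbO' (Finset.mem_coe.mp h))
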